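/- arXiv:2510.17294 — 2 statements merged into one kernel-verified Lean document; each statement's English description precedes it below -/
import Mathlib

section
/- Suppose m > 0 and Requirements 1 and 2 hold. Fix k ≥ 1 and a step size γ with 0 < γ ≤ 1/L_k, where L_k = λ_max(Q + m(4k−2)A). If x_k ∈ C and x_{k+1} = x_k − γ∇J_k(x_k), then x_{k+1} ∈ C; i.e., the feasible set C is positively invariant under the gradient descent step. -/
open Matrix Filter

noncomputable def fObj {n : ℕ} (Q : Matrix (Fin n) (Fin n) ℝ) (q : Fin n → ℝ) (x : Fin n → ℝ) : ℝ :=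
  (1 / 2) * (x ⬝ᵥ Q.mulVec x) + q ⬝ᵥ x

noncomputable def gCon {n : ℕ} (A : Matrix (Fin n) (Fin n) ℝ) (v : Fin n → ℝ) (x : Fin n → ℝ) : ℝ :=
  (x - v) ⬝ᵥ A.mulVec (x - v)

noncomputable def pPen {n : ℕ} (A : Matrix (Fin n) (Fin n) ℝ) (v : Fin n → ℝ) (m : ℝ) (k : ℕ)
    (x : Fin n → ℝ) : ℝ :=
  (m / (k : ℝ)) * (gCon A v x) ^ k

noncomputable def Jaux {n : ℕ} (Q : Matrix (Fin n) (Fin n) ℝ) (q : Fin n → ℝ)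
    (A : Matrix (Fin n) (Fin n) ℝ) (v : Fin n → ℝ) (m : ℝ) (k : ℕ) (x : Fin n → ℝ) : ℝ :=
  fObj Q q x + pPen A v m k x

noncomputable def gradF {n : ℕ} (Q : Matrix (Fin n) (Fin n) ℝ) (q : Fin n → ℝ)
    (x : Fin n → ℝ) : Fin n → ℝ :=
  Q.mulVec x + q

noncomputable def gradG {n : ℕ} (A : Matrix (Fin n) (Fin n) ℝ) (v : Fin n → ℝ)
    (x : Fin n → ℝ) : Fin n → ℝ :=
  (2 : ℝ) • A.mulVec (x - v)

noncomputable def gradJ {n : ℕ} (Q : Matrix (Fin n) (Fin n) ℝ) (q : Fin n → ℝ)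
    (A : Matrix (Fin n) (Fin n) ℝ) (v : Fin n → ℝ) (m : ℝ) (k : ℕ) (x : Fin n → ℝ) : Fin n → ℝ :=
  gradF Q q x + (m * (gCon A v x) ^ (k - 1)) • gradG A v x

noncomputable def lambdaMax {n : ℕ} (M : Matrix (Fin n) (Fin n) ℝ) : ℝ :=
  sSup {μ : ℝ | Module.End.HasEigenvalue (Matrix.toLin' M) μ}

noncomputable def lambdaMin {n : ℕ} (M : Matrix (Fin n) (Fin n) ℝ) : ℝ :=
  sInf {μ : ℝ | Module.End.HasEigenvalue (Matrix.toLin' M) μ}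

noncomputable def enormVec {n : ℕ} (w : Fin n → ℝ) : ℝ := Real.sqrt (w ⬝ᵥ w)

def Req1 {n : ℕ} (Q : Matrix (Fin n) (Fin n) ℝ) (q : Fin n → ℝ)
    (A : Matrix (Fin n) (Fin n) ℝ) (v : Fin n → ℝ) (m : ℝ) : Prop :=
  ∀ x : Fin n → ℝ, gCon A v x = 1 →
    0 ≤ gradG A v x ⬝ᵥ (gradF Q q x + m • gradG A v x)

noncomputable def Lsmooth {n : ℕ} (Q A : Matrix (Fin n) (Fin n) ℝ) (m : ℝ) (k : ℕ) : ℝ :=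
  lambdaMax (Q + (m * (4 * (k : ℝ) - 2)) • A)

def Req2 {n : ℕ} (Q : Matrix (Fin n) (Fin n) ℝ) (q : Fin n → ℝ)
    (A : Matrix (Fin n) (Fin n) ℝ) (v : Fin n → ℝ) (m : ℝ) : Prop :=
  ∀ x : Fin n → ℝ, gCon A v x = 1 →
    ((gradF Q q x + m • gradG A v x) ⬝ᵥ (gradF Q q x + m • gradG A v x)) * enormVec (gradG A v x) ≤
      2 * (Real.sqrt (lambdaMin A) / lambdaMax A) * Lsmooth Q A m 1 *
        ((gradF Q q x + m • gradG A v x) ⬝ᵥ gradG A v x)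

section AuxInvariance
open Matrix
variable {n : ℕ}

private lemma dotSelf_nonneg_aux (w : Fin n → ℝ) : 0 ≤ w ⬝ᵥ w :=
  Finset.sum_nonneg fun _ _ => mul_self_nonneg _

private lemma dotSelf_pos_aux {w : Fin n → ℝ} (hw : w ≠ 0) : 0 < w ⬝ᵥ w :=
  lt_of_le_of_ne (dotSelf_nonneg_aux w) (fun h => hw (dotProduct_self_eq_zero.mp h.symm))

private lemma dot_mulVec_symm {M : Matrix (Fin n) (Fin n) ℝ} (hM : M.IsHermitian)
    (u w : Fin n → ℝ) : u ⬝ᵥ M.mulVec w = w ⬝ᵥ M.mulVec u := by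
  rw [Matrix.dotProduct_mulVec, dotProduct_comm, ← Matrix.mulVec_transpose]
  congr 1
  conv_rhs => rw [← hM.eq]
  rw [Matrix.conjTranspose_eq_transpose_of_trivial]

private lemma psd_dot_nonneg {B : Matrix (Fin n) (Fin n) ℝ} (hB : B.PosSemidef)
    (w : Fin n → ℝ) : 0 ≤ w ⬝ᵥ B.mulVec w := by
  have := hB.dotProduct_mulVec_nonneg w
  simpa using this

private lemma pd_dot_pos {B : Matrix (Fin n) (Fin n) ℝ} (hB : B.PosDef)
    {w : Fin n → ℝ} (hw : w ≠ 0) : 0 < w ⬝ᵥ B.mulVec w := by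
  have := hB.dotProduct_mulVec_pos hw
  simpa using this

private lemma cs_plain (u w : Fin n → ℝ) : (u ⬝ᵥ w)^2 ≤ (u ⬝ᵥ u) * (w ⬝ᵥ w) := by
  simpa [dotProduct, pow_two] using
    Finset.sum_mul_sq_le_sq_mul_sq Finset.univ u w

private lemma cs_psd {B : Matrix (Fin n) (Fin n) ℝ} (hB : B.PosSemidef) (u w : Fin n → ℝ) :
    (u ⬝ᵥ B.mulVec w)^2 ≤ (u ⬝ᵥ B.mulVec u) * (w ⬝ᵥ B.mulVec w) := by
  have key : ∀ t : ℝ, 0 ≤ (w ⬝ᵥ B.mulVec w) * (t*t) + (2*(u ⬝ᵥ B.mulVec w)) * t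
      + (u ⬝ᵥ B.mulVec u) := by
    intro t
    have h := psd_dot_nonneg hB (u + t • w)
    have hsym := dot_mulVec_symm hB.1 w u
    have : (u + t • w) ⬝ᵥ B.mulVec (u + t • w)
        = (w ⬝ᵥ B.mulVec w) * (t*t) + (2*(u ⬝ᵥ B.mulVec w)) * t + (u ⬝ᵥ B.mulVec u) := by
      simp [Matrix.mulVec_add, Matrix.mulVec_smul, dotProduct_add, add_dotProduct,
        dotProduct_smul, smul_dotProduct, smul_eq_mul, hsym]
      ring
    linarith [this ▸ h]
  have := discrim_le_zero key
  rw [discrim] at this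
  nlinarith [this]

private noncomputable def toE (w : Fin n → ℝ) : EuclideanSpace ℝ (Fin n) :=
  (WithLp.equiv 2 (Fin n → ℝ)).symm w

private lemma inner_toE (x y : Fin n → ℝ) : (inner ℝ (toE x) (toE y) : ℝ) = x ⬝ᵥ y := by
  simp [toE, PiLp.inner_apply, dotProduct]
  exact Finset.sum_congr rfl fun i _ => mul_comm _ _

private lemma spectral_expand {M : Matrix (Fin n) (Fin n) ℝ} (hM : M.IsHermitian)
    (w : Fin n → ℝ) :
    w ⬝ᵥ M.mulVec w
      = ∑ i, hM.eigenvalues i * ((hM.eigenvectorBasis i : Fin n → ℝ) ⬝ᵥ w)^2 := by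
  classical
  set b := hM.eigenvectorBasis with hb
  have h0 : w ⬝ᵥ M.mulVec w = (inner ℝ (toE w) (toE (M.mulVec w)) : ℝ) := (inner_toE _ _).symm
  rw [h0, ← b.sum_inner_mul_inner]
  apply Finset.sum_congr rfl
  intro i _
  have hbi : b i = toE (b i : Fin n → ℝ) := rfl
  rw [hbi, inner_toE, inner_toE]
  have h1 : (b i : Fin n → ℝ) ⬝ᵥ M.mulVec w = w ⬝ᵥ M.mulVec (b i : Fin n → ℝ) :=
    dot_mulVec_symm hM _ _
  have h2 : M.mulVec (b i : Fin n → ℝ) = hM.eigenvalues i • (b i : Fin n → ℝ) :=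
    hM.mulVec_eigenvectorBasis i
  rw [h1, h2, dotProduct_smul]
  have h3 : toE (b i : Fin n → ℝ) ⬝ᵥ w = (b i : Fin n → ℝ) ⬝ᵥ w := rfl
  rw [h3, dotProduct_comm w]
  simp [smul_eq_mul]
  ring

private lemma dot_self_expand {M : Matrix (Fin n) (Fin n) ℝ} (hM : M.IsHermitian)
    (w : Fin n → ℝ) :
    w ⬝ᵥ w = ∑ i, ((hM.eigenvectorBasis i : Fin n → ℝ) ⬝ᵥ w)^2 := by
  classical
  set b := hM.eigenvectorBasis with hb
  have h0 : w ⬝ᵥ w = (inner ℝ (toE w) (toE w) : ℝ) := (inner_toE _ _).symm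
  rw [h0, ← b.sum_inner_mul_inner]
  apply Finset.sum_congr rfl
  intro i _
  have hbi : b i = toE (b i : Fin n → ℝ) := rfl
  rw [hbi, inner_toE, inner_toE, dotProduct_comm]
  have h3 : toE (b i : Fin n → ℝ) ⬝ᵥ w = (b i : Fin n → ℝ) ⬝ᵥ w := rfl
  rw [h3]
  ring

private lemma eig_mem {M : Matrix (Fin n) (Fin n) ℝ} (hM : M.IsHermitian) (i : Fin n) :
    hM.eigenvalues i ∈ {μ : ℝ | Module.End.HasEigenvalue (Matrix.toLin' M) μ} := by
  apply Module.End.hasEigenvalue_of_hasEigenvector (x := (hM.eigenvectorBasis i : Fin n → ℝ))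
  constructor
  · rw [Module.End.mem_eigenspace_iff]
    have h2 : Matrix.toLin' M (hM.eigenvectorBasis i : Fin n → ℝ)
        = M.mulVec (hM.eigenvectorBasis i : Fin n → ℝ) := Matrix.toLin'_apply M _
    exact h2.trans (hM.mulVec_eigenvectorBasis i)
  · intro h
    have := hM.eigenvectorBasis.orthonormal.ne_zero i
    exact this (by ext j; exact congrFun h j)

private lemma eigval_of_mem {M : Matrix (Fin n) (Fin n) ℝ} {μ : ℝ}
    (h : Module.End.HasEigenvalue (Matrix.toLin' M) μ) :
    ∃ w : Fin n → ℝ, w ≠ 0 ∧ w ⬝ᵥ M.mulVec w = μ * (w ⬝ᵥ w) := by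
  obtain ⟨w, hw⟩ := h.exists_hasEigenvector
  refine ⟨w, hw.2, ?_⟩
  have : M.mulVec w = μ • w := by
    have h2 := hw.apply_eq_smul
    rw [Matrix.toLin'_apply] at h2
    exact h2
  rw [this, dotProduct_smul, smul_eq_mul]

private lemma univNe (hn : 0 < n) : (Finset.univ : Finset (Fin n)).Nonempty :=
  ⟨⟨0, hn⟩, Finset.mem_univ _⟩

section withN
variable (hn : 0 < n)
include hn

private lemma lambdaMax_eq {M : Matrix (Fin n) (Fin n) ℝ} (hM : M.IsHermitian) :
    lambdaMax M = Finset.univ.sup' (univNe hn) hM.eigenvalues := by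
  classical
  set μs := Finset.univ.sup' (univNe hn) hM.eigenvalues with hμs
  have hub : ∀ μ ∈ {μ : ℝ | Module.End.HasEigenvalue (Matrix.toLin' M) μ}, μ ≤ μs := by
    intro μ hμ
    obtain ⟨w, hw0, hwe⟩ := eigval_of_mem hμ
    have hexp := spectral_expand hM w
    have hns := dot_self_expand hM w
    have hle : w ⬝ᵥ M.mulVec w ≤ μs * (w ⬝ᵥ w) := by
      rw [hexp, hns, Finset.mul_sum]
      apply Finset.sum_le_sum
      intro i _
      have h1 : hM.eigenvalues i ≤ μs := Finset.le_sup' _ (Finset.mem_univ i)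
      nlinarith [sq_nonneg ((hM.eigenvectorBasis i : Fin n → ℝ) ⬝ᵥ w)]
    have hpos := dotSelf_pos_aux hw0
    nlinarith [hwe ▸ hle]
  obtain ⟨i0, -, hi0⟩ := Finset.exists_mem_eq_sup' (univNe hn) hM.eigenvalues
  have hmem : μs ∈ {μ : ℝ | Module.End.HasEigenvalue (Matrix.toLin' M) μ} := by
    rw [hμs, hi0]; exact eig_mem hM i0
  exact le_antisymm (csSup_le ⟨μs, hmem⟩ hub) (le_csSup ⟨μs, hub⟩ hmem)

private lemma rayleigh_le {M : Matrix (Fin n) (Fin n) ℝ} (hM : M.IsHermitian)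
    (w : Fin n → ℝ) : w ⬝ᵥ M.mulVec w ≤ lambdaMax M * (w ⬝ᵥ w) := by
  rw [lambdaMax_eq hn hM, spectral_expand hM w, dot_self_expand hM w, Finset.mul_sum]
  apply Finset.sum_le_sum
  intro i _
  have h1 : hM.eigenvalues i ≤ _ := Finset.le_sup' hM.eigenvalues (Finset.mem_univ i)
  nlinarith [sq_nonneg ((hM.eigenvectorBasis i : Fin n → ℝ) ⬝ᵥ w)]

private lemma lambdaMax_mono {P M : Matrix (Fin n) (Fin n) ℝ} (hP : P.IsHermitian)
    (hM : M.IsHermitian) (h : ∀ w : Fin n → ℝ, w ⬝ᵥ P.mulVec w ≤ w ⬝ᵥ M.mulVec w) :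
    lambdaMax P ≤ lambdaMax M := by
  apply csSup_le
  · exact ⟨hP.eigenvalues ⟨0, hn⟩, eig_mem hP ⟨0, hn⟩⟩
  · intro μ hμ
    obtain ⟨w, hw0, hwe⟩ := eigval_of_mem hμ
    have h2 := (h w).trans (rayleigh_le hn hM w)
    have hpos := dotSelf_pos_aux hw0
    nlinarith [hwe ▸ h2]

private lemma lambdaMin_eq {M : Matrix (Fin n) (Fin n) ℝ} (hM : M.IsHermitian) :
    lambdaMin M = Finset.univ.inf' (univNe hn) hM.eigenvalues := by
  classical
  set μs := Finset.univ.inf' (univNe hn) hM.eigenvalues with hμs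
  have hub : ∀ μ ∈ {μ : ℝ | Module.End.HasEigenvalue (Matrix.toLin' M) μ}, μs ≤ μ := by
    intro μ hμ
    obtain ⟨w, hw0, hwe⟩ := eigval_of_mem hμ
    have hexp := spectral_expand hM w
    have hns := dot_self_expand hM w
    have hle : μs * (w ⬝ᵥ w) ≤ w ⬝ᵥ M.mulVec w := by
      rw [hexp, hns, Finset.mul_sum]
      apply Finset.sum_le_sum
      intro i _
      have h1 : μs ≤ hM.eigenvalues i := Finset.inf'_le _ (Finset.mem_univ i)
      nlinarith [sq_nonneg ((hM.eigenvectorBasis i : Fin n → ℝ) ⬝ᵥ w)]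
    have hpos := dotSelf_pos_aux hw0
    nlinarith [hwe ▸ hle]
  obtain ⟨i0, -, hi0⟩ := Finset.exists_mem_eq_inf' (univNe hn) hM.eigenvalues
  have hmem : μs ∈ {μ : ℝ | Module.End.HasEigenvalue (Matrix.toLin' M) μ} := by
    rw [hμs, hi0]; exact eig_mem hM i0
  exact le_antisymm (csInf_le ⟨μs, hub⟩ hmem) (le_csInf ⟨μs, hmem⟩ hub)

private lemma rayleigh_ge {M : Matrix (Fin n) (Fin n) ℝ} (hM : M.IsHermitian)
    (w : Fin n → ℝ) : lambdaMin M * (w ⬝ᵥ w) ≤ w ⬝ᵥ M.mulVec w := by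
  rw [lambdaMin_eq hn hM, spectral_expand hM w, dot_self_expand hM w, Finset.mul_sum]
  apply Finset.sum_le_sum
  intro i _
  have h1 : _ ≤ hM.eigenvalues i := Finset.inf'_le hM.eigenvalues (Finset.mem_univ i)
  nlinarith [sq_nonneg ((hM.eigenvectorBasis i : Fin n → ℝ) ⬝ᵥ w)]

private lemma lambdaMin_pos {M : Matrix (Fin n) (Fin n) ℝ} (hM : M.PosDef) :
    0 < lambdaMin M := by
  rw [lambdaMin_eq hn hM.1]
  obtain ⟨i0, -, hi0⟩ := Finset.exists_mem_eq_inf' (univNe hn) hM.1.eigenvalues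
  rw [hi0]
  have hne := hM.1.eigenvectorBasis.orthonormal.ne_zero i0
  have hwne : (hM.1.eigenvectorBasis i0 : Fin n → ℝ) ≠ 0 := by
    intro h; exact hne (by ext j; exact congrFun h j)
  have hpos : 0 < (hM.1.eigenvectorBasis i0 : Fin n → ℝ) ⬝ᵥ
      M.mulVec (hM.1.eigenvectorBasis i0 : Fin n → ℝ) := pd_dot_pos hM hwne
  have heig : M.mulVec (hM.1.eigenvectorBasis i0 : Fin n → ℝ)
      = hM.1.eigenvalues i0 • (hM.1.eigenvectorBasis i0 : Fin n → ℝ) :=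
    hM.1.mulVec_eigenvectorBasis i0
  rw [heig, dotProduct_smul, smul_eq_mul] at hpos
  nlinarith [dotSelf_pos_aux hwne]

end withN

private lemma pow_sub_le_aux {a b : ℝ} (hb : 0 ≤ b) (hba : b ≤ a) (ha : a ≤ 1) (N : ℕ) :
    a^N - b^N ≤ N*(a-b) := by
  induction N with
  | zero => simp
  | succ N ih =>
    have h1 : b^N ≤ 1 := pow_le_one₀ hb (hba.trans ha)
    have h2 : 0 ≤ a^N - b^N := sub_nonneg.2 (pow_le_pow_left₀ hb hba N)
    have h3 : a^(N+1) = a*a^N := by ring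
    have h4 : b^(N+1) = b*b^N := by ring
    have ha0 : 0 ≤ a := hb.trans hba
    push_cast
    nlinarith [mul_nonneg ha0 h2, mul_nonneg hb h2]

private lemma sym_pow (e : ℕ) {a b : ℝ} (ha0 : 0 ≤ a) (ha1 : a ≤ 1) (hb0 : 0 ≤ b)
    (hb1 : b ≤ 1) :
    (a-b)*(a^(2*e+1) - b^(2*e+1)) ≤ (2*(e:ℝ)+1)*(a-b)^2 := by
  rcases le_total b a with h | h
  · have := pow_sub_le_aux hb0 h ha1 (2*e+1)
    push_cast at this
    nlinarith [sub_nonneg.2 h]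
  · have := pow_sub_le_aux ha0 h hb1 (2*e+1)
    push_cast at this
    nlinarith [sub_nonneg.2 h]

private lemma key2 (e : ℕ) {a b c : ℝ} (ha0 : 0 ≤ a) (ha1 : a ≤ 1) (hb0 : 0 ≤ b)
    (hb1 : b ≤ 1) (hc : c ≤ a*b) :
    (a^2)^(e+1) + (b^2)^(e+1) - c*((a^2)^e + (b^2)^e)
      ≤ (2*(e:ℝ)+1)*(a^2 + b^2 - 2*c) := by
  have hs := sym_pow e ha0 ha1 hb0 hb1
  have hpa : (a^2)^e ≤ 1 := pow_le_one₀ (sq_nonneg a) (by nlinarith)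
  have hpb : (b^2)^e ≤ 1 := pow_le_one₀ (sq_nonneg b) (by nlinarith)
  have hpa0 : 0 ≤ (a^2)^e := pow_nonneg (sq_nonneg a) e
  have hpb0 : 0 ≤ (b^2)^e := pow_nonneg (sq_nonneg b) e
  have e1 : (a^2)^(e+1) = (a^2)^e * (a*a) := by ring
  have e2 : a^(2*e+1) = (a^2)^e * a := by rw [pow_succ, pow_mul]
  have e3 : (b^2)^(e+1) = (b^2)^e * (b*b) := by ring
  have e4 : b^(2*e+1) = (b^2)^e * b := by rw [pow_succ, pow_mul]
  have hab : 0 ≤ a*b - c := sub_nonneg.2 hc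
  rw [e1, e3]
  rw [e2, e4] at hs
  nlinarith [mul_nonneg hab (sub_nonneg.2 (add_le_add hpa hpb : (a^2)^e + (b^2)^e ≤ 1+1)),
    mul_nonneg hab (by positivity : (0:ℝ) ≤ 2*(e:ℝ))]

private lemma key_scalar (e : ℕ) {s₁ s₂ c : ℝ} (h₁ : 0 ≤ s₁) (h₁' : s₁ ≤ 1) (h₂ : 0 ≤ s₂)
    (h₂' : s₂ ≤ 1) (hc : c^2 ≤ s₁*s₂) :
    s₁^(e+1) + s₂^(e+1) - c*(s₁^e + s₂^e) ≤ (2*(e:ℝ)+1)*(s₁ + s₂ - 2*c) := by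
  set a := Real.sqrt s₁ with hadef
  set b := Real.sqrt s₂ with hbdef
  have ha2 : a^2 = s₁ := Real.sq_sqrt h₁
  have hb2 : b^2 = s₂ := Real.sq_sqrt h₂
  have ha0 : 0 ≤ a := Real.sqrt_nonneg _
  have hb0 : 0 ≤ b := Real.sqrt_nonneg _
  have ha1 : a ≤ 1 := by rw [hadef, show (1:ℝ) = Real.sqrt 1 by simp]; exact Real.sqrt_le_sqrt h₁'
  have hb1 : b ≤ 1 := by rw [hbdef, show (1:ℝ) = Real.sqrt 1 by simp]; exact Real.sqrt_le_sqrt h₂'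
  have hcab : c ≤ a*b := by
    have h5 : c ≤ |c| := le_abs_self c
    have h6 : |c| = Real.sqrt (c^2) := (Real.sqrt_sq_eq_abs c).symm
    have h7 : Real.sqrt (c^2) ≤ Real.sqrt (s₁*s₂) := Real.sqrt_le_sqrt hc
    have h8 : Real.sqrt (s₁*s₂) = a*b := by rw [hadef, hbdef, Real.sqrt_mul h₁]
    linarith [h5.trans (h6 ▸ (h7.trans_eq h8))]
  have := key2 e ha0 ha1 hb0 hb1 hcab
  rw [ha2, hb2] at this
  exact this

private lemma mono_key {Q A : Matrix (Fin n) (Fin n) ℝ} (hQ : Q.PosSemidef)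
    (hA : A.PosSemidef) {m L : ℝ} (hm : 0 ≤ m) (e : ℕ)
    (hL : ∀ w : Fin n → ℝ,
      w ⬝ᵥ Q.mulVec w + (m*(4*(e:ℝ)+2)) * (w ⬝ᵥ A.mulVec w) ≤ L * (w ⬝ᵥ w))
    (b : Fin n → ℝ) (u₁ u₂ : Fin n → ℝ)
    (h₁ : u₁ ⬝ᵥ A.mulVec u₁ ≤ 1) (h₂ : u₂ ⬝ᵥ A.mulVec u₂ ≤ 1) :
    0 ≤ ((L • u₂ - Q.mulVec u₂ - (2*m*(u₂ ⬝ᵥ A.mulVec u₂)^e) • A.mulVec u₂ - b)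
        - (L • u₁ - Q.mulVec u₁ - (2*m*(u₁ ⬝ᵥ A.mulVec u₁)^e) • A.mulVec u₁ - b))
        ⬝ᵥ (u₂ - u₁) := by
  set s₁ := u₁ ⬝ᵥ A.mulVec u₁ with hs₁
  set s₂ := u₂ ⬝ᵥ A.mulVec u₂ with hs₂
  set c := u₁ ⬝ᵥ A.mulVec u₂ with hc
  have hs₁0 : 0 ≤ s₁ := psd_dot_nonneg hA u₁
  have hs₂0 : 0 ≤ s₂ := psd_dot_nonneg hA u₂
  have hcs : c^2 ≤ s₁ * s₂ := cs_psd hA u₁ u₂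
  have hAsym := dot_mulVec_symm hA.1 u₂ u₁
  have hQsym := dot_mulVec_symm hQ.1 u₂ u₁
  have hkey := key_scalar e hs₁0 h₁ hs₂0 h₂ hcs
  have hLδ := hL (u₂ - u₁)
  have hexp : ((L • u₂ - Q.mulVec u₂ - (2*m*s₂^e) • A.mulVec u₂ - b)
        - (L • u₁ - Q.mulVec u₁ - (2*m*s₁^e) • A.mulVec u₁ - b)) ⬝ᵥ (u₂ - u₁)
      = L * ((u₂-u₁) ⬝ᵥ (u₂-u₁)) - ((u₂-u₁) ⬝ᵥ Q.mulVec (u₂-u₁))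
        - 2*m*(s₂^e*(s₂ - c) + s₁^e*(s₁ - c)) := by
    have l1 : ∀ (M : Matrix (Fin n) (Fin n) ℝ) (x y : Fin n → ℝ),
        (M.mulVec x) ⬝ᵥ y = y ⬝ᵥ M.mulVec x := fun M x y => dotProduct_comm _ _
    simp only [sub_dotProduct, smul_dotProduct, dotProduct_sub,
      Matrix.mulVec_sub, smul_eq_mul, l1]
    rw [hAsym, hQsym, ← hs₁, ← hs₂, ← hc]
    ring
  rw [hexp]
  have hAd : (u₂-u₁) ⬝ᵥ A.mulVec (u₂-u₁) = s₁ + s₂ - 2*c := by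
    simp only [Matrix.mulVec_sub, dotProduct_sub, sub_dotProduct]
    rw [dot_mulVec_symm hA.1 u₂ u₁]
    ring
  rw [hAd] at hLδ
  have p1 : s₁^(e+1) = s₁^e*s₁ := pow_succ _ _
  have p2 : s₂^(e+1) = s₂^e*s₂ := pow_succ _ _
  rw [p1, p2] at hkey
  nlinarith [mul_le_mul_of_nonneg_left hkey hm, hLδ]

end AuxInvariance

section BoundaryStep
open Matrix
variable {n : ℕ}

private lemma boundary_key (hn : 0 < n) {Q A : Matrix (Fin n) (Fin n) ℝ}
    (hQ : Q.PosSemidef) (hA : A.PosDef) {m : ℝ} (hm : 0 < m) (q v : Fin n → ℝ)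
    (hreq1 : Req1 Q q A v m) (hreq2 : Req2 Q q A v m)
    {L : ℝ} (hL1 : Lsmooth Q A m 1 ≤ L)
    (u : Fin n → ℝ) (hu : u ⬝ᵥ A.mulVec u = 1) :
    (L • u - Q.mulVec u - (2*m) • A.mulVec u - (Q.mulVec v + q)) ⬝ᵥ
      A.mulVec (L • u - Q.mulVec u - (2*m) • A.mulVec u - (Q.mulVec v + q)) ≤ L^2 := by
  set b := Q.mulVec v + q with hbdef
  set x := v + u with hxdef
  have hxu : x - v = u := by rw [hxdef]; abel
  have hgx : gCon A v x = 1 := by rw [gCon, hxu]; exact hu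
  have hggu : gradG A v x = (2:ℝ) • A.mulVec u := by rw [gradG, hxu]
  set h := gradF Q q x + m • gradG A v x with hhdef
  have hhu : h = Q.mulVec u + (2*m) • A.mulVec u + b := by
    rw [hhdef, hggu, gradF, hxdef, Matrix.mulVec_add, hbdef]
    ext i
    simp [Pi.add_apply, Pi.smul_apply, smul_eq_mul]
    ring
  -- requirement 1 and 2
  have hG0 : 0 ≤ gradG A v x ⬝ᵥ h := hreq1 x hgx
  have hreq2' := hreq2 x hgx
  rw [← hhdef] at hreq2'
  -- basic spectral facts
  have hlmin : 0 < lambdaMin A := lambdaMin_pos hn hA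
  have hu0 : u ≠ 0 := by
    intro h0
    rw [h0] at hu
    simp at hu
  have huu : 0 < u ⬝ᵥ u := dotSelf_pos_aux hu0
  have hlmaxA : 0 < lambdaMax A := by
    have := rayleigh_le hn hA.1 u
    rw [hu] at this
    nlinarith
  -- ‖∇g‖² ≥ 4 λmin
  have hAuAu : lambdaMin A ≤ (A.mulVec u) ⬝ᵥ (A.mulVec u) := by
    have hcs := cs_plain u (A.mulVec u)
    rw [hu] at hcs
    have hray := rayleigh_ge hn hA.1 u
    rw [hu] at hray
    nlinarith
  have hggd : gradG A v x ⬝ᵥ gradG A v x = 4*((A.mulVec u) ⬝ᵥ (A.mulVec u)) := by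
    rw [hggu]
    simp [smul_dotProduct, dotProduct_smul, smul_eq_mul]
    ring
  have hN : 2*Real.sqrt (lambdaMin A) ≤ enormVec (gradG A v x) := by
    rw [enormVec, hggd]
    have h4 : (4:ℝ)*lambdaMin A = (2:ℝ)^2*lambdaMin A := by norm_num
    have : Real.sqrt ((2:ℝ)^2*lambdaMin A) ≤ Real.sqrt (4*((A.mulVec u) ⬝ᵥ (A.mulVec u))) := by
      apply Real.sqrt_le_sqrt
      nlinarith
    rwa [Real.sqrt_mul (by norm_num) (lambdaMin A), Real.sqrt_sq (by norm_num : (0:ℝ) ≤ 2)]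
      at this
  -- derive λmaxA * ‖h‖² ≤ L₁ * ⟨h, ∇g⟩
  set G := h ⬝ᵥ gradG A v x with hGdef
  have hGgg : gradG A v x ⬝ᵥ h = G := by rw [hGdef, dotProduct_comm]
  have hG0' : 0 ≤ G := by rw [← hGgg]; exact hG0
  set S := Real.sqrt (lambdaMin A) with hSdef
  have hS0 : 0 < S := Real.sqrt_pos.mpr hlmin
  have hmain : lambdaMax A * (h ⬝ᵥ h) ≤ Lsmooth Q A m 1 * G := by
    have h1 : (h ⬝ᵥ h)*(2*S) ≤ (h ⬝ᵥ h)*(enormVec (gradG A v x)) :=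
      mul_le_mul_of_nonneg_left hN (dotSelf_nonneg_aux h)
    have h2 : (h ⬝ᵥ h)*(enormVec (gradG A v x)) ≤ 2*(S/lambdaMax A)*Lsmooth Q A m 1*G := hreq2'
    have h3 : (h ⬝ᵥ h)*(2*S)*(lambdaMax A) ≤ 2*(S/lambdaMax A)*Lsmooth Q A m 1*G*(lambdaMax A) :=
      mul_le_mul_of_nonneg_right (h1.trans h2) hlmaxA.le
    have h4 : 2*(S/lambdaMax A)*Lsmooth Q A m 1*G*(lambdaMax A)
        = (2*S)*(Lsmooth Q A m 1*G) := by
      field_simp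
    rw [h4] at h3
    have h5 : (2*S)*(lambdaMax A * (h ⬝ᵥ h)) ≤ (2*S)*(Lsmooth Q A m 1*G) := by
      calc (2*S)*(lambdaMax A * (h ⬝ᵥ h)) = (h ⬝ᵥ h)*(2*S)*(lambdaMax A) := by ring
        _ ≤ (2*S)*(Lsmooth Q A m 1*G) := h3
    exact le_of_mul_le_mul_left h5 (by positivity)
  have hrayh : h ⬝ᵥ A.mulVec h ≤ lambdaMax A * (h ⬝ᵥ h) := rayleigh_le hn hA.1 h
  have hhAh : h ⬝ᵥ A.mulVec h ≤ L * G := by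
    have := hrayh.trans hmain
    nlinarith [mul_le_mul_of_nonneg_right hL1 hG0']
  -- the quantity X = u ⬝ᵥ A h
  have hX : u ⬝ᵥ A.mulVec h = G/2 := by
    have hsym : u ⬝ᵥ A.mulVec h = h ⬝ᵥ A.mulVec u := dot_mulVec_symm hA.1 u h
    have : G = 2*(h ⬝ᵥ A.mulVec u) := by
      rw [hGdef, hggu, dotProduct_smul, smul_eq_mul]
    rw [hsym, this]
    ring
  -- final expansion
  have hfin : (L • u - h) ⬝ᵥ A.mulVec (L • u - h)
      = L^2*(u ⬝ᵥ A.mulVec u) - 2*L*(u ⬝ᵥ A.mulVec h) + h ⬝ᵥ A.mulVec h := by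
    have hsym : h ⬝ᵥ A.mulVec u = u ⬝ᵥ A.mulVec h := dot_mulVec_symm hA.1 h u
    simp only [sub_dotProduct, smul_dotProduct, dotProduct_sub,
      Matrix.mulVec_sub, Matrix.mulVec_smul, dotProduct_smul, smul_eq_mul]
    rw [hsym]
    ring
  have hgoal : (L • u - h) ⬝ᵥ A.mulVec (L • u - h) ≤ L^2 := by
    rw [hfin, hu, hX]
    nlinarith [hhAh]
  have heq : L • u - Q.mulVec u - (2*m) • A.mulVec u - b = L • u - h := by
    rw [hhu]
    ext i
    simp [Pi.sub_apply, Pi.add_apply, Pi.smul_apply, smul_eq_mul]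
    ring
  rw [heq]
  exact hgoal

end BoundaryStep

section StepB
open Matrix
variable {n : ℕ}

private lemma stepB {Q A : Matrix (Fin n) (Fin n) ℝ} (hQ : Q.PosSemidef) (hA : A.PosDef)
    {m L : ℝ} (hm : 0 < m) (e : ℕ)
    (hL : ∀ w : Fin n → ℝ,
      w ⬝ᵥ Q.mulVec w + (m*(4*(e:ℝ)+2)) * (w ⬝ᵥ A.mulVec w) ≤ L * (w ⬝ᵥ w))
    (b : Fin n → ℝ)
    (hbound : ∀ w : Fin n → ℝ, w ⬝ᵥ A.mulVec w = 1 →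
      (L • w - Q.mulVec w - (2*m) • A.mulVec w - b) ⬝ᵥ
        A.mulVec (L • w - Q.mulVec w - (2*m) • A.mulVec w - b) ≤ L^2)
    (u : Fin n → ℝ) (hu : u ⬝ᵥ A.mulVec u ≤ 1) :
    (L • u - Q.mulVec u - (2*m*(u ⬝ᵥ A.mulVec u)^e) • A.mulVec u - b) ⬝ᵥ
      A.mulVec (L • u - Q.mulVec u - (2*m*(u ⬝ᵥ A.mulVec u)^e) • A.mulVec u - b) ≤ L^2 := by
  by_cases hs1 : u ⬝ᵥ A.mulVec u = 1
  · have hco : (2*m*(u ⬝ᵥ A.mulVec u)^e) = 2*m := by rw [hs1, one_pow, mul_one]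
    rw [hco]
    exact hbound u hs1
  have hslt : u ⬝ᵥ A.mulVec u < 1 := lt_of_le_of_ne hu hs1
  set F1 := L • u - Q.mulVec u - (2*m*(u ⬝ᵥ A.mulVec u)^e) • A.mulVec u - b with hF1def
  set TF1 := F1 ⬝ᵥ A.mulVec F1 with hTF1def
  have hTF1nn : 0 ≤ TF1 := psd_dot_nonneg hA.posSemidef F1
  rcases eq_or_lt_of_le hTF1nn with hTF | hTF
  · rw [← hTF]; positivity
  set w := A.mulVec F1 with hwdef
  have hw0 : w ≠ 0 := by
    intro h0
    have hz : TF1 = 0 := by rw [hTF1def, h0]; simp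
    rw [hz] at hTF
    exact lt_irrefl _ hTF
  set α := w ⬝ᵥ A.mulVec w with hαdef
  have hα : 0 < α := pd_dot_pos hA hw0
  set β := u ⬝ᵥ A.mulVec w with hβdef
  set D := β^2 + α*(1 - u ⬝ᵥ A.mulVec u) with hDdef
  have hD : β^2 < D := by
    rw [hDdef]
    nlinarith
  have hD0 : 0 ≤ D := (sq_nonneg β).trans hD.le
  set η := (Real.sqrt D - β)/α with hηdef
  have hη : 0 < η := by
    rw [hηdef]
    apply div_pos _ hα
    have h1 : |β| < Real.sqrt D := by
      rw [← Real.sqrt_sq_eq_abs]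
      exact Real.sqrt_lt_sqrt (sq_nonneg β) hD
    have := le_abs_self β
    linarith
  set u₂ := u + η • w with hu₂def
  have hsqrtD : (Real.sqrt D)^2 = D := Real.sq_sqrt hD0
  have hs₂ : u₂ ⬝ᵥ A.mulVec u₂ = 1 := by
    have hsym : w ⬝ᵥ A.mulVec u = β := by
      rw [hβdef]; exact (dot_mulVec_symm hA.1 u w).symm
    have hexp : u₂ ⬝ᵥ A.mulVec u₂ = (u ⬝ᵥ A.mulVec u) + 2*η*β + η^2*α := by
      rw [hu₂def]
      simp only [Matrix.mulVec_add, Matrix.mulVec_smul, dotProduct_add,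
        add_dotProduct, dotProduct_smul, smul_dotProduct, smul_eq_mul]
      rw [hsym, ← hβdef, ← hαdef]
      ring
    rw [hexp, hηdef]
    have hαne : α ≠ 0 := hα.ne'
    field_simp
    nlinarith [hsqrtD, hα]
  have hmono := mono_key hQ hA.posSemidef hm.le e hL b u u₂ hu (le_of_eq hs₂)
  have hdiff : u₂ - u = η • w := by rw [hu₂def]; abel
  have hco2 : (2*m*(u₂ ⬝ᵥ A.mulVec u₂)^e) = 2*m := by rw [hs₂, one_pow, mul_one]
  set F2 := L • u₂ - Q.mulVec u₂ - (2*m) • A.mulVec u₂ - b with hF2def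
  have hF2eq : L • u₂ - Q.mulVec u₂ - (2*m*(u₂ ⬝ᵥ A.mulVec u₂)^e) • A.mulVec u₂ - b = F2 := by
    rw [hco2]
  rw [hF2eq, hdiff] at hmono
  have hsplit : (F2 - F1) ⬝ᵥ (η • w) = η * (F2 ⬝ᵥ w - TF1) := by
    rw [hTF1def, hwdef]
    simp only [sub_dotProduct, dotProduct_smul, smul_eq_mul]
    try ring
  rw [hsplit] at hmono
  have hZ : TF1 ≤ F2 ⬝ᵥ w := by nlinarith
  have hcs : (F2 ⬝ᵥ A.mulVec F1)^2 ≤ (F2 ⬝ᵥ A.mulVec F2) * TF1 := by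
    rw [hTF1def]
    exact cs_psd hA.posSemidef F2 F1
  have hTF2 : F2 ⬝ᵥ A.mulVec F2 ≤ L^2 := hbound u₂ hs₂
  have hZw : F2 ⬝ᵥ w = F2 ⬝ᵥ A.mulVec F1 := by rw [hwdef]
  rw [hZw] at hZ
  nlinarith [hcs, hTF2, hZ, hTF]

end StepB

/-- Under `m > 0` and Requirements 1–2, for `k ≥ 1` and step size
`0 < γ ≤ 1/L_k` with `L_k = λ_max(Q + m(4k−2)A)`, a gradient descent step
`x_{k+1} = x_k − γ ∇J_k(x_k)` starting at `x_k ∈ C` stays in `C`: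
the feasible set is positively invariant. -/
theorem feasible_set_positively_invariant {n : ℕ} (hn : 1 ≤ n)
    (Q A : Matrix (Fin n) (Fin n) ℝ) (q v : Fin n → ℝ)
    (hQ : Q.PosSemidef) (hA : A.PosDef) (m : ℝ) (hm : 0 < m)
    (hreq1 : Req1 Q q A v m) (hreq2 : Req2 Q q A v m)
    (k : ℕ) (hk : 1 ≤ k) (γ : ℝ) (hγ0 : 0 < γ) (hγ : γ ≤ 1 / Lsmooth Q A m k)
    (xk : Fin n → ℝ) (hxk : gCon A v xk ≤ 1) :
    gCon A v (xk - γ • gradJ Q q A v m k xk) ≤ 1 := by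
  have hn0 : 0 < n := hn
  set e := k - 1 with hedef
  have hke : k = e + 1 := by omega
  set u := xk - v with hudef
  have hs1 : u ⬝ᵥ A.mulVec u ≤ 1 := hxk
  have hs0 : 0 ≤ u ⬝ᵥ A.mulVec u := psd_dot_nonneg hA.posSemidef u
  -- Hermitian facts
  have hsmul : ∀ c : ℝ, (c • A).IsHermitian := by
    intro c
    unfold Matrix.IsHermitian
    rw [Matrix.conjTranspose_smul, hA.1.eq]
    simp
  have hMh : (Q + (m * (4 * (k:ℝ) - 2)) • A).IsHermitian := hQ.1.add (hsmul _)
  have hM1h : (Q + (m * (4 * ((1:ℕ):ℝ) - 2)) • A).IsHermitian := hQ.1.add (hsmul _)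
  have hLs : Lsmooth Q A m k = lambdaMax (Q + (m * (4 * (k:ℝ) - 2)) • A) := rfl
  -- Rayleigh bound defining L
  have hL_ray : ∀ w : Fin n → ℝ,
      w ⬝ᵥ Q.mulVec w + (m*(4*(e:ℝ)+2)) * (w ⬝ᵥ A.mulVec w)
        ≤ Lsmooth Q A m k * (w ⬝ᵥ w) := by
    intro w
    have h1 := rayleigh_le hn0 hMh w
    rw [Matrix.add_mulVec, Matrix.smul_mulVec, dotProduct_add,
      dotProduct_smul, smul_eq_mul] at h1
    have h2 : m*(4*(e:ℝ)+2) = m * (4*(k:ℝ) - 2) := by rw [hke]; push_cast; ring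
    rw [hLs, h2]
    exact h1
  -- positivity of L
  have hL0 : 0 < Lsmooth Q A m k := by
    have hw0ne : (Pi.single (⟨0, hn0⟩ : Fin n) (1:ℝ) : Fin n → ℝ) ≠ 0 := by
      intro h0
      have h1 := congrFun h0 ⟨0, hn0⟩
      simp [Pi.single_eq_same] at h1
    have h1 := hL_ray (Pi.single ⟨0, hn0⟩ 1)
    have h2 := pd_dot_pos hA hw0ne
    have h3 := psd_dot_nonneg hQ (Pi.single (⟨0, hn0⟩ : Fin n) (1:ℝ))
    have h4 := dotSelf_pos_aux hw0ne
    have he2 : (0:ℝ) < m*(4*(e:ℝ)+2) := by positivity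
    nlinarith
  -- L₁ ≤ L_k
  have hL1le : Lsmooth Q A m 1 ≤ Lsmooth Q A m k := by
    have hk1 : (1:ℝ) ≤ (k:ℝ) := Nat.one_le_cast.mpr hk
    apply lambdaMax_mono hn0 hM1h hMh
    intro w
    rw [Matrix.add_mulVec, Matrix.smul_mulVec, dotProduct_add,
      dotProduct_smul, smul_eq_mul, Matrix.add_mulVec, Matrix.smul_mulVec,
      dotProduct_add, dotProduct_smul, smul_eq_mul]
    have hAw := psd_dot_nonneg hA.posSemidef w
    have : (0:ℝ) ≤ m*(4*(k:ℝ) - 4) := by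
      apply mul_nonneg hm.le
      linarith
    push_cast
    nlinarith
  -- boundary bound
  have hbound : ∀ w : Fin n → ℝ, w ⬝ᵥ A.mulVec w = 1 →
      (Lsmooth Q A m k • w - Q.mulVec w - (2*m) • A.mulVec w - (Q.mulVec v + q)) ⬝ᵥ
        A.mulVec (Lsmooth Q A m k • w - Q.mulVec w - (2*m) • A.mulVec w
          - (Q.mulVec v + q)) ≤ (Lsmooth Q A m k)^2 :=
    fun w hw => boundary_key hn0 hQ hA hm q v hreq1 hreq2 hL1le w hw
  -- interior bound via stepB
  have hstep := stepB hQ hA hm e hL_ray (Q.mulVec v + q) hbound u hs1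
  -- identify F u with L•u - gradJ
  have hdu : Lsmooth Q A m k • u - Q.mulVec u - (2*m*(u ⬝ᵥ A.mulVec u)^e) • A.mulVec u
      - (Q.mulVec v + q) = Lsmooth Q A m k • u - gradJ Q q A v m k xk := by
    unfold gradJ gradF gradG
    have hk1 : k - 1 = e := rfl
    rw [hk1]
    have hgc : gCon A v xk = u ⬝ᵥ A.mulVec u := rfl
    rw [hgc]
    have hxkv : Q.mulVec xk = Q.mulVec u + Q.mulVec v := by
      have hx : xk = u + v := by rw [hudef]; abel
      rw [hx, Matrix.mulVec_add]
    rw [hxkv]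
    have hxv : xk - v = u := rfl
    rw [hxv]
    ext i
    simp [Pi.sub_apply, Pi.add_apply, Pi.smul_apply, smul_eq_mul]
    ring
  rw [hdu] at hstep
  -- expansions
  have hgoal_exp : gCon A v (xk - γ • gradJ Q q A v m k xk)
      = (u ⬝ᵥ A.mulVec u) - 2*γ*(u ⬝ᵥ A.mulVec (gradJ Q q A v m k xk))
        + γ^2*((gradJ Q q A v m k xk) ⬝ᵥ A.mulVec (gradJ Q q A v m k xk)) := by
    have hxv2 : xk - γ • gradJ Q q A v m k xk - v = u - γ • gradJ Q q A v m k xk := by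
      rw [hudef]; abel
    rw [gCon, hxv2]
    simp only [Matrix.mulVec_sub, Matrix.mulVec_smul, dotProduct_sub,
      sub_dotProduct, dotProduct_smul, smul_dotProduct, smul_eq_mul]
    rw [dot_mulVec_symm hA.1 (gradJ Q q A v m k xk) u]
    ring
  have hR_exp : (Lsmooth Q A m k • u - gradJ Q q A v m k xk) ⬝ᵥ
      A.mulVec (Lsmooth Q A m k • u - gradJ Q q A v m k xk)
      = (Lsmooth Q A m k)^2*(u ⬝ᵥ A.mulVec u)
        - 2*(Lsmooth Q A m k)*(u ⬝ᵥ A.mulVec (gradJ Q q A v m k xk))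
        + (gradJ Q q A v m k xk) ⬝ᵥ A.mulVec (gradJ Q q A v m k xk) := by
    simp only [Matrix.mulVec_sub, Matrix.mulVec_smul, dotProduct_sub,
      sub_dotProduct, dotProduct_smul, smul_dotProduct, smul_eq_mul]
    rw [dot_mulVec_symm hA.1 (gradJ Q q A v m k xk) u]
    ring
  rw [hR_exp] at hstep
  have h1γ : 0 ≤ 1 - γ*(Lsmooth Q A m k) := by
    have := (le_div_iff₀ hL0).mp hγ
    linarith
  have hD0 : 0 ≤ (gradJ Q q A v m k xk) ⬝ᵥ A.mulVec (gradJ Q q A v m k xk) :=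
    psd_dot_nonneg hA.posSemidef _
  rw [hgoal_exp]
  have hkey : Lsmooth Q A m k * ((u ⬝ᵥ A.mulVec u)
      - 2*γ*(u ⬝ᵥ A.mulVec (gradJ Q q A v m k xk))
      + γ^2*((gradJ Q q A v m k xk) ⬝ᵥ A.mulVec (gradJ Q q A v m k xk)))
      ≤ Lsmooth Q A m k * 1 := by
    nlinarith [mul_nonneg (mul_nonneg hL0.le h1γ) (sub_nonneg.2 hs1),
      mul_nonneg hγ0.le (sub_nonneg.2 hstep),
      mul_nonneg (mul_nonneg hγ0.le hD0) h1γ]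
  exact le_of_mul_le_mul_left hkey hL0
end

section
/- Fix k ≥ 1, m ≥ 0, γ > 0, c ≥ 0, and x_k ∈ ℝⁿ with g(x_k) = c. Let x_{k+1} = x_k − γ∇J_k(x_k), and define T_c = I − γ(Q + 2m·c^{k−1}·A) and v' = v − γ(q + Qv). If T_c is invertible, then (x_{k+1} − v')ᵀ T_c^{−1} A T_c^{−1} (x_{k+1} − v') = c; equivalently x_{k+1} − v' = T_c(x_k − v), so the gradient step maps the level set {x : g(x) = c} onto the ellipsoidal surface {y : (y−v')ᵀT_c^{−1}AT_c^{−1}(y−v') = c}. -/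
open Matrix Filter

/-- With `g(x_k) = c`, `x_{k+1} = x_k − γ∇J_k(x_k)`,
`T_c = I − γ(Q + 2m c^{k−1} A)`, and `v' = v − γ(q + Qv)`, if `T_c` is invertible then
`(x_{k+1} − v')ᵀ T_c⁻¹ A T_c⁻¹ (x_{k+1} − v') = c`; equivalently
`x_{k+1} − v' = T_c (x_k − v)`, so the gradient step maps the level set
`{x : g(x) = c}` onto the ellipsoidal surface `{y : (y−v')ᵀ T_c⁻¹ A T_c⁻¹ (y−v') = c}`. -/
theorem gradient_step_maps_level_sets {n : ℕ} (hn : 1 ≤ n)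
    (Q A : Matrix (Fin n) (Fin n) ℝ) (q v : Fin n → ℝ)
    (hQ : Q.PosSemidef) (hA : A.PosDef) (m : ℝ) (hm : 0 ≤ m)
    (k : ℕ) (hk : 1 ≤ k) (γ : ℝ) (hγ : 0 < γ) (c : ℝ) (hc : 0 ≤ c)
    (xk : Fin n → ℝ) (hgxk : gCon A v xk = c)
    (hTc : IsUnit ((1 : Matrix (Fin n) (Fin n) ℝ) - γ • (Q + (2 * m * c ^ (k - 1)) • A))) :
    (xk - γ • gradJ Q q A v m k xk - (v - γ • (q + Q.mulVec v))) ⬝ᵥ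
        (((1 : Matrix (Fin n) (Fin n) ℝ) - γ • (Q + (2 * m * c ^ (k - 1)) • A))⁻¹ * A *
          ((1 : Matrix (Fin n) (Fin n) ℝ) - γ • (Q + (2 * m * c ^ (k - 1)) • A))⁻¹).mulVec
          (xk - γ • gradJ Q q A v m k xk - (v - γ • (q + Q.mulVec v))) = c ∧
      xk - γ • gradJ Q q A v m k xk - (v - γ • (q + Q.mulVec v)) =
        ((1 : Matrix (Fin n) (Fin n) ℝ) - γ • (Q + (2 * m * c ^ (k - 1)) • A)).mulVec (xk - v) := by
  set T : Matrix (Fin n) (Fin n) ℝ := (1 : Matrix (Fin n) (Fin n) ℝ) - γ • (Q + (2 * m * c ^ (k - 1)) • A) with hT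
  have hTsym : Tᵀ = T := by
    simp [hT, Matrix.transpose_smul, ← Matrix.conjTranspose_eq_transpose_of_trivial,
      hQ.1.eq, hA.1.eq]
  have h2 : xk - γ • gradJ Q q A v m k xk - (v - γ • (q + Q.mulVec v)) = T.mulVec (xk - v) := by
    simp only [hT, gradJ, gradF, gradG, hgxk, Matrix.sub_mulVec, Matrix.add_mulVec,
      Matrix.one_mulVec, Matrix.smul_mulVec, Matrix.mulVec_sub, smul_smul]
    module
  refine ⟨?_, h2⟩
  rw [h2]
  have hdet : IsUnit T.det := (Matrix.isUnit_iff_isUnit_det T).mp hTc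
  have hinv : T⁻¹ * T = 1 := Matrix.nonsing_inv_mul T hdet
  calc T.mulVec (xk - v) ⬝ᵥ (T⁻¹ * A * T⁻¹).mulVec (T.mulVec (xk - v))
      = (xk - v) ⬝ᵥ (Tᵀ * (T⁻¹ * A * T⁻¹ * T)).mulVec (xk - v) := by
        rw [Matrix.dotProduct_mulVec, Matrix.vecMul_mulVec, ← Matrix.dotProduct_mulVec,
          Matrix.mulVec_mulVec, Matrix.mul_assoc Tᵀ]
    _ = (xk - v) ⬝ᵥ A.mulVec (xk - v) := by
        rw [hTsym]
        rw [Matrix.mul_assoc (T⁻¹ * A), hinv, Matrix.mul_one, ← Matrix.mul_assoc,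
          Matrix.mul_assoc T, ← Matrix.mul_assoc T, Matrix.mul_nonsing_inv T hdet,
          Matrix.one_mul]
    _ = c := hgxk
end
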